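/- In the infinitesimal Cherednik algebra H_c of gl_2, the commutator of d = τ(y_1x - x_1y) - (2ey_1y + h(x_1y + y_1x) - 2fx_1x) with x satisfies [d, x] = [τc + (3/2)c, x] - (cx + (1/2)[Δ, [c,x]]). -/

import Mathlib

section helpers
variable {A : Type*} [Ring A]

private lemma rsw {v w u : A} (h : v * w = u) (z : A) : v * (w * z) = u * z := by
  rw [← mul_assoc, h]

private lemma brkt {a b r : A} (h : ⁅a, b⁆ = r) : b * a = a * b - r := by
  rw [Ring.lie_def] at h; rw [← h]; abel

private lemma brkt' {a b r : A} (h : ⁅a, b⁆ = r) : a * b = b * a + r := by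
  rw [Ring.lie_def] at h; rw [← h]; abel

private lemma brkt0 {a b : A} (h : ⁅a, b⁆ = 0) : a * b = b * a := by
  have := brkt' h; simpa using this

private lemma two_smul' (a : A) : (2 : A) * a = (2 : ℕ) • a := by simp
private lemma four_smul' (a : A) : (4 : A) * a = (4 : ℕ) • a := by simp
private lemma two_comm' (a : A) : a * (2 : A) = (2 : ℕ) • a := by
  have := (Nat.cast_commute (2:ℕ) a).symm.eq
  rw [Nat.cast_ofNat] at this
  rw [this, nsmul_eq_mul, Nat.cast_ofNat]
private lemma four_comm' (a : A) : a * (4 : A) = (4 : ℕ) • a := by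
  have := (Nat.cast_commute (4:ℕ) a).symm.eq
  rw [Nat.cast_ofNat] at this
  rw [this, nsmul_eq_mul, Nat.cast_ofNat]

private lemma jac (x y z : A) : ⁅x, ⁅y, z⁆⁆ = ⁅⁅x, y⁆, z⁆ + ⁅y, ⁅x, z⁆⁆ := by
  simp only [Ring.lie_def]; noncomm_ring

end helpers



set_option maxHeartbeats 1000000

theorem stmt13 {k : Type} [Field k] [CharZero k] {A : Type} [Ring A] [Algebra k A]
    (ee ff hh tt xx yy x1 y1 : A) (c fc gc : A)
    (hHE : ⁅hh, ee⁆ = 2*ee) (hHF : ⁅hh, ff⁆ = -(2*ff)) (hEF : ⁅ee, ff⁆ = hh)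
    (hTE : ⁅tt, ee⁆ = 0) (hTF : ⁅tt, ff⁆ = 0) (hTH : ⁅tt, hh⁆ = 0)
    (hEX : ⁅ee, xx⁆ = 0) (hEY : ⁅ee, yy⁆ = xx)
    (hFX : ⁅ff, xx⁆ = yy) (hFY : ⁅ff, yy⁆ = 0)
    (hHX : ⁅hh, xx⁆ = xx) (hHY : ⁅hh, yy⁆ = -yy)
    (hTX : ⁅tt, xx⁆ = xx) (hTY : ⁅tt, yy⁆ = yy)
    (hEX1 : ⁅ee, x1⁆ = 0) (hEY1 : ⁅ee, y1⁆ = x1)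
    (hFX1 : ⁅ff, x1⁆ = y1) (hFY1 : ⁅ff, y1⁆ = 0)
    (hHX1 : ⁅hh, x1⁆ = x1) (hHY1 : ⁅hh, y1⁆ = -y1)
    (hTX1 : ⁅tt, x1⁆ = -x1) (hTY1 : ⁅tt, y1⁆ = -y1)
    (hcmmem : c ∈ Algebra.adjoin k ({ee, ff, hh, tt} : Set A))
    (hcmc : ∀ u ∈ Algebra.adjoin k ({ee, ff, hh, tt} : Set A), c * u = u * c)
    (hfcmmem : fc ∈ Algebra.adjoin k ({ee, ff, hh, tt} : Set A))
    (hfcmc : ∀ u ∈ Algebra.adjoin k ({ee, ff, hh, tt} : Set A), fc * u = u * fc)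
    (hgcmmem : gc ∈ Algebra.adjoin k ({ee, ff, hh, tt} : Set A))
    (hgcmc : ∀ u ∈ Algebra.adjoin k ({ee, ff, hh, tt} : Set A), gc * u = u * gc)
    (hcx : ⁅c, xx⁆ = (2*hh*fc + gc)*xx + 4*ee*fc*yy)
    (hcy : ⁅c, yy⁆ = (-(2*hh*fc) + gc)*yy + 4*ff*fc*xx)
    (hXY : ⁅xx, yy⁆ = 0) (hX1Y1 : ⁅x1, y1⁆ = 0)
    (hY1X : ⁅y1, xx⁆ = 2*hh*fc + gc)
    (hX1X : ⁅x1, xx⁆ = -(4*ee*fc))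
    (hY1Y : ⁅y1, yy⁆ = 4*ff*fc)
    (hX1Y : ⁅x1, yy⁆ = 2*hh*fc - gc)
    (hgen : Algebra.adjoin k ({ee, ff, hh, tt, xx, yy, x1, y1} : Set A) = ⊤)
    (hPBW : LinearIndependent k (fun m : Fin 8 → ℕ =>
      ee ^ m 0 * ff ^ m 1 * hh ^ m 2 * tt ^ m 3 * xx ^ m 4 * yy ^ m 5 * x1 ^ m 6 * y1 ^ m 7))
    :
    ⁅(tt*(y1*xx - x1*yy) - (2*ee*(y1*yy) + hh*(y1*xx + x1*yy) - 2*ff*(x1*xx))), xx⁆ =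
      ⁅tt*c + ((3 : k)/2) • c, xx⁆ -
      (c*xx + ((1 : k)/2) • ⁅(4*ff*ee + hh*hh + 2*hh), ⁅c, xx⁆⁆) := by
  have me : ee ∈ Algebra.adjoin k ({ee, ff, hh, tt} : Set A) := Algebra.subset_adjoin (by simp)
  have mf : ff ∈ Algebra.adjoin k ({ee, ff, hh, tt} : Set A) := Algebra.subset_adjoin (by simp)
  have mh : hh ∈ Algebra.adjoin k ({ee, ff, hh, tt} : Set A) := Algebra.subset_adjoin (by simp)
  have mt : tt ∈ Algebra.adjoin k ({ee, ff, hh, tt} : Set A) := Algebra.subset_adjoin (by simp)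
  have s_ce := hcmc ee me
  have s_cf := hcmc ff mf
  have s_ch := hcmc hh mh
  have s_ct := hcmc tt mt
  have s_Fe := hfcmc ee me
  have s_Ff := hfcmc ff mf
  have s_Fh := hfcmc hh mh
  have s_Ft := hfcmc tt mt
  have s_Fc := hfcmc c hcmmem
  have s_Ge := hgcmc ee me
  have s_Gf := hgcmc ff mf
  have s_Gh := hgcmc hh mh
  have s_Gt := hgcmc tt mt
  have s_Gc := hgcmc c hcmmem
  have s_GF := hgcmc fc hfcmmem
  have s_fe := brkt hEF
  have s_he := brkt' hHE
  have s_hf := brkt' hHF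
  have s_te := brkt0 hTE
  have s_tf := brkt0 hTF
  have s_th := brkt0 hTH
  have s_xe := (brkt0 hEX).symm
  have s_xf := brkt hFX
  have s_xh := brkt hHX
  have s_xt := brkt hTX
  have s_xc := brkt hcx
  have s_ye := brkt hEY
  have s_yf := (brkt0 hFY).symm
  have s_yh := brkt hHY
  have s_yt := brkt hTY
  have s_yc := brkt hcy
  have s_yx := (brkt0 hXY).symm
  have s_x1e := (brkt0 hEX1).symm
  have s_x1f := brkt hFX1
  have s_x1h := brkt hHX1
  have s_x1t := brkt hTX1
  have s_x1x := brkt' hX1X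
  have s_x1y := brkt' hX1Y
  have s_y1e := brkt hEY1
  have s_y1f := (brkt0 hFY1).symm
  have s_y1h := brkt hHY1
  have s_y1t := brkt hTY1
  have s_y1x := brkt' hY1X
  have s_y1y := brkt' hY1Y
  have s_y1x1 := (brkt0 hX1Y1).symm
  have hYX : ⁅yy, xx⁆ = (0:A) := by rw [Ring.lie_def, brkt0 hXY, sub_self]
  have E1 : ⁅(2*hh*fc - gc : A), xx⁆ + ⁅4*ee*fc, yy⁆ = 0 := by
    have j := jac x1 yy xx
    rw [hYX, hX1Y, hX1X] at j
    simp only [Ring.lie_def, mul_zero, zero_mul, sub_zero, mul_neg, neg_mul] at j ⊢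
    refine Eq.trans ?_ j.symm
    abel
  have E2 : ⁅(2*hh*fc + gc : A), yy⁆ - ⁅4*ff*fc, xx⁆ = 0 := by
    have j := jac y1 xx yy
    rw [hXY, hY1X, hY1Y] at j
    simp only [Ring.lie_def, mul_zero, zero_mul, sub_zero] at j ⊢
    refine Eq.trans ?_ j.symm
    abel
  rw [← sub_eq_zero]
  have key : ⁅(tt*(y1*xx - x1*yy) - (2*ee*(y1*yy) + hh*(y1*xx + x1*yy) - 2*ff*(x1*xx))), xx⁆ -
      (⁅tt*c + ((3 : k)/2) • c, xx⁆ -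
      (c*xx + ((1 : k)/2) • ⁅(4*ff*ee + hh*hh + 2*hh), ⁅c, xx⁆⁆)) =
      (2 - hh - tt) * (⁅(2*hh*fc - gc : A), xx⁆ + ⁅4*ee*fc, yy⁆) +
        2*ee*(⁅(2*hh*fc + gc : A), yy⁆ - ⁅4*ff*fc, xx⁆) := by
    simp only [Ring.lie_def, smul_sub, smul_add, smul_neg, mul_add, add_mul, mul_sub, sub_mul,
    mul_neg, neg_mul, neg_neg, neg_add, mul_assoc, mul_smul_comm, smul_mul_assoc,
    two_smul', four_smul', two_comm', four_comm', smul_smul,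
    s_ce, s_cf, s_ch, s_ct, s_Fe, s_Ff, s_Fh, s_Ft, s_Fc, s_Ge, s_Gf, s_Gh, s_Gt, s_Gc, s_GF,
    s_fe, s_he, s_hf, s_te, s_tf, s_th,
    s_xe, s_xf, s_xh, s_xt, s_xc, s_ye, s_yf, s_yh, s_yt, s_yc, s_yx,
    s_x1e, s_x1f, s_x1h, s_x1t, s_x1x, s_x1y,
    s_y1e, s_y1f, s_y1h, s_y1t, s_y1x, s_y1y, s_y1x1,
    rsw s_ce, rsw s_cf, rsw s_ch, rsw s_ct, rsw s_Fe, rsw s_Ff, rsw s_Fh, rsw s_Ft, rsw s_Fc,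
    rsw s_Ge, rsw s_Gf, rsw s_Gh, rsw s_Gt, rsw s_Gc, rsw s_GF,
    rsw s_fe, rsw s_he, rsw s_hf, rsw s_te, rsw s_tf, rsw s_th,
    rsw s_xe, rsw s_xf, rsw s_xh, rsw s_xt, rsw s_xc, rsw s_ye, rsw s_yf, rsw s_yh, rsw s_yt,
    rsw s_yc, rsw s_yx,
    rsw s_x1e, rsw s_x1f, rsw s_x1h, rsw s_x1t, rsw s_x1x, rsw s_x1y,
    rsw s_y1e, rsw s_y1f, rsw s_y1h, rsw s_y1t, rsw s_y1x, rsw s_y1y, rsw s_y1x1]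
    module
  rw [key, E1, E2, mul_zero, mul_zero, add_zero]
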